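/- The determinant of the (d+1)×(d+1) matrix with (i,j)-entry (a+i+j)! equals a!·(a+1)!···(a+d)!·d!·(d-1)!···2!·1!. In particular it is strictly positive. -/

import Mathlib

open Nat Matrix Finset Polynomial

/-- The determinant of the `(d+1)×(d+1)` matrix with `(i,j)`-entry `(a+i+j)!` equals
`a!(a+1)!⋯(a+d)! · d!(d-1)!⋯2!1!`, and in particular it is strictly positive. -/
theorem hankel_factorial_det_eq (a d : ℕ) :
    Matrix.det (Matrix.of fun i j : Fin (d + 1) => ((a + i + j)! : ℝ)) =
      (∏ i ∈ Finset.range (d + 1), ((a + i)! : ℝ)) *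
        (∏ i ∈ Finset.range (d + 1), (i ! : ℝ)) ∧
    0 < Matrix.det (Matrix.of fun i j : Fin (d + 1) => ((a + i + j)! : ℝ)) := by
  have key : Matrix.det (Matrix.of fun i j : Fin (d + 1) => ((a + i + j)! : ℝ)) =
      (∏ i ∈ Finset.range (d + 1), ((a + i)! : ℝ)) *
        (∏ i ∈ Finset.range (d + 1), (i ! : ℝ)) := by
    set p : Fin (d + 1) → ℝ[X] := fun j => (ascPochhammer ℝ j).comp (X + C ((a : ℝ) + 1))
      with hp
    have hdeg : ∀ j : Fin (d + 1), (p j).natDegree = j := by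
      intro j
      simp only [hp]
      rw [natDegree_comp, ascPochhammer_natDegree, natDegree_X_add_C, mul_one]
    have hmonic : ∀ j : Fin (d + 1), (p j).Monic := fun j =>
      (monic_ascPochhammer ℝ j).comp_X_add_C _
    have heval : ∀ i j : Fin (d + 1),
        ((a + i)! : ℝ) * (p j).eval (i : ℝ) = ((a + i + j)! : ℝ) := by
      intro i j
      have h := factorial_mul_ascPochhammer ℝ (a + i) j
      simp only [hp, eval_comp, eval_add, eval_X, eval_C]
      rw [show ((i : ℕ) : ℝ) + ((a : ℝ) + 1) = ((a + (i : ℕ) : ℕ) : ℝ) + 1 by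
        push_cast; ring]
      rw [h]
    have h1 : (Matrix.of fun i j : Fin (d + 1) => ((a + i + j)! : ℝ)) =
        Matrix.of fun i j : Fin (d + 1) => ((a + i)! : ℝ) * (p j).eval ((i : ℕ) : ℝ) := by
      ext i j
      rw [Matrix.of_apply, Matrix.of_apply, heval]
    rw [h1]; erw [Matrix.det_mul_column (fun i : Fin (d + 1) => ((a + i)! : ℝ))
      (Matrix.of fun i j : Fin (d + 1) => (p j).eval ((i : ℕ) : ℝ))]
    have h2 := Matrix.det_eval_matrixOfPolynomials_eq_det_vandermonde
        (fun i : Fin (d + 1) => ((i : ℕ) : ℝ)) p hdeg hmonic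
    rw [det_vandermonde_id_eq_superFactorial] at h2
    rw [← h2]
    rw [← Nat.prod_range_succ_factorial]
    rw [Fin.prod_univ_eq_prod_range (fun i => ((a + i)! : ℝ))]
    push_cast
    ring
  refine ⟨key, ?_⟩
  rw [key]
  have h1 : (0:ℝ) < ∏ i ∈ Finset.range (d + 1), ((a + i)! : ℝ) :=
    Finset.prod_pos fun i _ => by exact_mod_cast Nat.factorial_pos _
  have h2 : (0:ℝ) < ∏ i ∈ Finset.range (d + 1), (i ! : ℝ) :=
    Finset.prod_pos fun i _ => by exact_mod_cast Nat.factorial_pos _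
  exact mul_pos h1 h2
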